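/- Let n ≥ 2 be an integer. For every integer e with 0 ≤ e ≤ n, one has 2e + C(e,2) + C(n−e,2) ≥ ⌊n/2⌋·⌊(n−1)/2⌋ + n − 1, with equality when e = ⌊(n−2)/2⌋. -/
import Mathlib


/-- `C2 x` is the binomial-type expression `x(x-1)/2`. -/
def C2 (x : ℤ) : ℤ := x * (x - 1) / 2

lemma C2_double (x : ℤ) : 2 * C2 x = x * (x - 1) := by
  have h : (2 : ℤ) ∣ x * (x - 1) := by
    rcases Int.even_or_odd x with ⟨k, hk⟩ | ⟨k, hk⟩ <;> subst hk
    · exact ⟨k * (k + k - 1), by ring⟩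
    · exact ⟨(2 * k + 1) * k, by ring⟩
  exact Int.mul_ediv_cancel' h

theorem stmt_8 (n : ℤ) (hn : 2 ≤ n) :
    (∀ e : ℤ, 0 ≤ e → e ≤ n →
      (n / 2) * ((n - 1) / 2) + n - 1 ≤ 2 * e + C2 e + C2 (n - e)) ∧
    (2 * ((n - 2) / 2) + C2 ((n - 2) / 2) + C2 (n - (n - 2) / 2) =
      (n / 2) * ((n - 1) / 2) + n - 1) := by
  rcases Int.even_or_odd n with ⟨k, hk⟩ | ⟨k, hk⟩
  · -- n = k + k, k ≥ 1
    have hk1 : 1 ≤ k := by omega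
    have d1 : n / 2 = k := by omega
    have d2 : (n - 1) / 2 = k - 1 := by omega
    have d3 : (n - 2) / 2 = k - 1 := by omega
    constructor
    · intro e he1 he2
      have h1 := C2_double e
      have h2 := C2_double (n - e)
      rw [d1, d2]
      nlinarith [sq_nonneg (e - k + 1)]
    · rw [d1, d2, d3]
      have h1 := C2_double (k - 1)
      have h2 := C2_double (n - (k - 1))
      nlinarith
  · -- n = 2k + 1, k ≥ 1
    have hk1 : 1 ≤ k := by omega
    have d1 : n / 2 = k := by omega
    have d2 : (n - 1) / 2 = k := by omega
    have d3 : (n - 2) / 2 = k - 1 := by omega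
    constructor
    · intro e he1 he2
      have h1 := C2_double e
      have h2 := C2_double (n - e)
      rw [d1, d2]
      have key : 0 ≤ (e - k) * (e - k + 1) := by
        rcases le_or_gt k e with h | h
        · exact mul_nonneg (by omega) (by omega)
        · have : 0 ≤ (k - e) * (k - e - 1) := mul_nonneg (by omega) (by omega)
          nlinarith
      nlinarith [key]
    · rw [d1, d2, d3]
      have h1 := C2_double (k - 1)
      have h2 := C2_double (n - (k - 1))
      nlinarith
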